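/- With the setup of the HDRDA classifier, the shrunken covariance estimator Σ̃_k = α_k Σ̂_k(λ) + γ I_p satisfies Σ̃_k = U (W_k ⊕ γ I_{p−q}) Uᵀ, where W_k = α_k{(1−λ) U₁ᵀ Σ̂_k U₁ + λ D_q} + γ I_q. -/

import Mathlib

open Matrix Finset

theorem hdrda_shrunken_block_form
    {p q r K : ℕ} (hqr : q + r = p)
    (Sk : Fin K → Matrix (Fin p) (Fin p) ℝ)
    (hSk : ∀ k, (Sk k).PosSemidef)
    (n : Fin K → ℝ) (hn : ∀ k, 0 < n k)
    (N : ℝ) (hN : N = ∑ k, n k)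
    (Sbar : Matrix (Fin p) (Fin p) ℝ)
    (hSbar : Sbar = N⁻¹ • ∑ k, n k • Sk k)
    (U : Matrix (Fin p) (Fin q ⊕ Fin r) ℝ)
    (hUl : U * Uᵀ = 1) (hUr : Uᵀ * U = 1)
    (Dq : Matrix (Fin q) (Fin q) ℝ)
    (d : Fin q → ℝ) (hd : ∀ i, 0 < d i) (hDq : Dq = Matrix.diagonal d)
    (hdecomp : Sbar = U * Matrix.fromBlocks Dq 0 0 (0 : Matrix (Fin r) (Fin r) ℝ) * Uᵀ)
    (lam : ℝ) (hlam : lam ∈ Set.Icc (0 : ℝ) 1)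
    (α : Fin K → ℝ) (hα : ∀ k, 0 ≤ α k)
    (γ : ℝ) (hγ : 0 ≤ γ)
    (U₁ : Matrix (Fin p) (Fin q) ℝ) (hU₁ : U₁ = U.submatrix id Sum.inl)
    (Stil Wk : Fin K → _)
    (hStil : ∀ k, Stil k = α k • ((1 - lam) • Sk k + lam • Sbar) + γ • (1 : Matrix (Fin p) (Fin p) ℝ))
    (hWk : ∀ k, Wk k = α k • ((1 - lam) • (U₁ᵀ * Sk k * U₁) + lam • Dq) + γ • (1 : Matrix (Fin q) (Fin q) ℝ)) :
    ∀ k, Stil k = U * Matrix.fromBlocks (Wk k) 0 0 (γ • (1 : Matrix (Fin r) (Fin r) ℝ)) * Uᵀ := by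
  intro k
  haveI : Nonempty (Fin K) := ⟨k⟩
  set U₂ : Matrix (Fin p) (Fin r) ℝ := U.submatrix id Sum.inr with hU₂
  have hUcols : U = fromCols U₁ U₂ := by
    ext i j
    cases j <;> simp [fromCols, hU₁, hU₂]
  have hN0 : 0 < N := by
    rw [hN]; exact Finset.sum_pos (fun m _ => hn m) Finset.univ_nonempty
  -- Uᵀ Sbar U = fromBlocks Dq 0 0 0
  have hUSbarU : Uᵀ * Sbar * U = fromBlocks Dq 0 0 0 := by
    calc Uᵀ * Sbar * U
        = (Uᵀ * U) * fromBlocks Dq 0 0 0 * (Uᵀ * U) := by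
          rw [hdecomp]; simp only [Matrix.mul_assoc]
      _ = fromBlocks Dq 0 0 0 := by rw [hUr, Matrix.one_mul, Matrix.mul_one]
  -- quadratic form identity
  have hquad : ∀ (S : Matrix (Fin p) (Fin p) ℝ) (j : Fin r),
      (Uᵀ * S * U) (Sum.inr j) (Sum.inr j)
        = (fun i => U₂ i j) ⬝ᵥ (S *ᵥ fun i => U₂ i j) := by
    intro S j
    simp only [Matrix.mul_apply, Matrix.transpose_apply, dotProduct, Matrix.mulVec,
      Finset.sum_mul, Finset.mul_sum]
    rw [Finset.sum_comm]
    refine Finset.sum_congr rfl fun i _ => Finset.sum_congr rfl fun l _ => ?_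
    simp [hU₂]
    ring
  -- each Sk k' annihilates U₂
  have hSkU₂ : ∀ k', Sk k' * U₂ = 0 := by
    intro k'
    have key : ∀ j : Fin r, Sk k' *ᵥ (fun i => U₂ i j) = 0 := by
      intro j
      have hnn : ∀ m : Fin K, 0 ≤ (Uᵀ * Sk m * U) (Sum.inr j) (Sum.inr j) := by
        intro m
        rw [hquad]
        have := (hSk m).dotProduct_mulVec_nonneg (fun i => U₂ i j)
        simpa using this
      have hsum : ∑ m, n m * (Uᵀ * Sk m * U) (Sum.inr j) (Sum.inr j) = 0 := by
        have hS : Uᵀ * Sbar * U = N⁻¹ • ∑ m, n m • (Uᵀ * Sk m * U) := by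
          rw [hSbar]
          simp only [Matrix.smul_mul, Matrix.mul_smul, Matrix.sum_mul, Matrix.mul_sum]
        have h0 : (Uᵀ * Sbar * U) (Sum.inr j) (Sum.inr j) = 0 := by
          rw [hUSbarU]; simp [fromBlocks]
        rw [hS] at h0
        have h1 : N⁻¹ * ∑ m, n m * (Uᵀ * Sk m * U) (Sum.inr j) (Sum.inr j) = 0 := by
          simpa [Matrix.smul_apply, Matrix.sum_apply] using h0
        rcases mul_eq_zero.mp h1 with h | h
        · exact absurd h (by positivity)
        · exact h
      have hz : ∀ m ∈ Finset.univ, n m * (Uᵀ * Sk m * U) (Sum.inr j) (Sum.inr j) = 0 :=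
        (Finset.sum_eq_zero_iff_of_nonneg
          (fun m _ => mul_nonneg (hn m).le (hnn m))).mp hsum
      have hz' : (Uᵀ * Sk k' * U) (Sum.inr j) (Sum.inr j) = 0 := by
        have := hz k' (Finset.mem_univ k')
        rcases mul_eq_zero.mp this with h | h
        · exact absurd h (hn k').ne'
        · exact h
      rw [hquad] at hz'
      have := ((hSk k').dotProduct_mulVec_zero_iff (fun i => U₂ i j)).mp (by simpa using hz')
      exact this
    ext i j
    have := congrFun (key j) i
    simpa [Matrix.mul_apply, Matrix.mulVec, dotProduct] using this
  -- with symmetry: U₂ᵀ Sk = 0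
  have hU₂Sk : ∀ k', U₂ᵀ * Sk k' = 0 := by
    intro k'
    have hsymm : (Sk k')ᵀ = Sk k' := by
      have := (hSk k').1
      rwa [Matrix.IsHermitian, Matrix.conjTranspose_eq_transpose_of_trivial] at this
    calc U₂ᵀ * Sk k' = (Sk k' * U₂)ᵀ := by rw [Matrix.transpose_mul, hsymm]
      _ = 0 := by rw [hSkU₂ k', Matrix.transpose_zero]
  -- block structure of Uᵀ Sk U
  have hUSkU : Uᵀ * Sk k * U = fromBlocks (U₁ᵀ * Sk k * U₁) 0 0 0 := by
    rw [hUcols, transpose_fromCols, fromRows_mul, fromRows_mul_fromCols]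
    rw [hU₂Sk k, Matrix.zero_mul, Matrix.zero_mul,
      Matrix.mul_assoc U₁ᵀ (Sk k) U₂, hSkU₂ k, Matrix.mul_zero]
  -- compute the middle block matrix
  have hmid : Uᵀ * Stil k * U = fromBlocks (Wk k) 0 0 (γ • (1 : Matrix (Fin r) (Fin r) ℝ)) := by
    rw [hStil k]
    simp only [Matrix.add_mul, Matrix.mul_add, Matrix.smul_mul, Matrix.mul_smul,
      Matrix.mul_one]
    rw [hUSkU, hUSbarU, hUr, hWk k]
    ext i j
    rcases i with i | i <;> rcases j with j | j <;>
      simp [fromBlocks, Matrix.one_apply, mul_comm]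
  calc Stil k = (U * Uᵀ) * Stil k * (U * Uᵀ) := by rw [hUl, Matrix.one_mul, Matrix.mul_one]
    _ = U * (Uᵀ * Stil k * U) * Uᵀ := by simp only [Matrix.mul_assoc]
    _ = U * Matrix.fromBlocks (Wk k) 0 0 (γ • (1 : Matrix (Fin r) (Fin r) ℝ)) * Uᵀ := by
        rw [hmid]
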